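/- The set of BK-valid formulas is closed under weak replacement: if (φ ↔ ψ) ∧ (∼φ ↔ ∼ψ) is valid, then for any formula context χ(·), χ(φ) ↔ χ(ψ) is valid. -/
import Mathlib


inductive BKForm : Type where
  | atom : ℕ → BKForm
  | bot  : BKForm
  | snot : BKForm → BKForm
  | and  : BKForm → BKForm → BKForm
  | or   : BKForm → BKForm → BKForm
  | imp  : BKForm → BKForm → BKForm
  | box  : BKForm → BKForm
  | dia  : BKForm → BKForm

def BKForm.neg (φ : BKForm) : BKForm := .imp φ .bot

def BKForm.biimp (φ ψ : BKForm) : BKForm := .and (.imp φ ψ) (.imp ψ φ)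

structure OWModel : Type 1 where
  S : Type
  ne : Nonempty S
  R : S → S → Prop
  Vp : ℕ → S → Prop
  Vm : ℕ → S → Prop

mutual
def verify (M : OWModel) : M.S → BKForm → Prop
  | x, .atom p => M.Vp p x
  | _, .bot => False
  | x, .snot φ => falsify M x φ
  | x, .and φ ψ => verify M x φ ∧ verify M x ψ
  | x, .or φ ψ => verify M x φ ∨ verify M x ψ
  | x, .imp φ ψ => verify M x φ → verify M x ψ
  | x, .box φ => ∀ y, M.R x y → verify M y φ
  | x, .dia φ => ∃ y, M.R x y ∧ verify M y φ
def falsify (M : OWModel) : M.S → BKForm → Prop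
  | x, .atom p => M.Vm p x
  | _, .bot => True
  | x, .snot φ => verify M x φ
  | x, .and φ ψ => falsify M x φ ∨ falsify M x ψ
  | x, .or φ ψ => falsify M x φ ∧ falsify M x ψ
  | x, .imp φ ψ => verify M x φ ∧ falsify M x ψ
  | x, .box φ => ∃ y, M.R x y ∧ falsify M y φ
  | x, .dia φ => ∀ y, M.R x y → falsify M y φ
end

def BKvalid (φ : BKForm) : Prop := ∀ (M : OWModel) (x : M.S), verify M x φ

def BKForm.subst : BKForm → ℕ → BKForm → BKForm
  | .atom p, a, θ => if p = a then θ else .atom p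
  | .bot, _, _ => .bot
  | .snot φ, a, θ => .snot (φ.subst a θ)
  | .and φ ψ, a, θ => .and (φ.subst a θ) (ψ.subst a θ)
  | .or φ ψ, a, θ => .or (φ.subst a θ) (ψ.subst a θ)
  | .imp φ ψ, a, θ => .imp (φ.subst a θ) (ψ.subst a θ)
  | .box φ, a, θ => .box (φ.subst a θ)
  | .dia φ, a, θ => .dia (φ.subst a θ)

theorem stmt8 (φ ψ : BKForm)
    (h : BKvalid (.and (BKForm.biimp φ ψ) (BKForm.biimp (.snot φ) (.snot ψ)))) :
    ∀ (χ : BKForm) (a : ℕ), BKvalid (BKForm.biimp (χ.subst a φ) (χ.subst a ψ)) := by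
  intro χ a M x
  have key : ∀ (y : M.S),
      (verify M y φ ↔ verify M y ψ) ∧ (falsify M y φ ↔ falsify M y ψ) := by
    intro y
    have h1 := h M y
    simp only [verify, falsify, BKForm.biimp] at h1
    obtain ⟨⟨hpq, hqp⟩, hnpq, hnqp⟩ := h1
    exact ⟨⟨hpq, hqp⟩, ⟨hnpq, hnqp⟩⟩
  have main : ∀ (χ : BKForm) (y : M.S),
      (verify M y (χ.subst a φ) ↔ verify M y (χ.subst a ψ)) ∧
      (falsify M y (χ.subst a φ) ↔ falsify M y (χ.subst a ψ)) := by
    intro χ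
    have kv := fun y => (key y).1
    have kf := fun y => (key y).2
    induction χ with
    | atom p =>
      intro y
      by_cases hp : p = a <;> simp [BKForm.subst, hp, kv, kf, verify, falsify]
    | bot => intro y; simp [BKForm.subst, verify, falsify]
    | snot χ ih =>
      intro y
      simp only [BKForm.subst, verify, falsify]
      exact ⟨(ih y).2, (ih y).1⟩
    | and χ₁ χ₂ ih1 ih2 =>
      intro y
      have v1 := fun z => (ih1 z).1; have f1 := fun z => (ih1 z).2
      have v2 := fun z => (ih2 z).1; have f2 := fun z => (ih2 z).2
      simp [BKForm.subst, verify, falsify, v1, f1, v2, f2]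
    | or χ₁ χ₂ ih1 ih2 =>
      intro y
      have v1 := fun z => (ih1 z).1; have f1 := fun z => (ih1 z).2
      have v2 := fun z => (ih2 z).1; have f2 := fun z => (ih2 z).2
      simp [BKForm.subst, verify, falsify, v1, f1, v2, f2]
    | imp χ₁ χ₂ ih1 ih2 =>
      intro y
      have v1 := fun z => (ih1 z).1; have f1 := fun z => (ih1 z).2
      have v2 := fun z => (ih2 z).1; have f2 := fun z => (ih2 z).2
      simp [BKForm.subst, verify, falsify, v1, f1, v2, f2]
    | box χ ih =>
      intro y
      have v1 := fun z => (ih z).1; have f1 := fun z => (ih z).2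
      simp [BKForm.subst, verify, falsify, v1, f1]
    | dia χ ih =>
      intro y
      have v1 := fun z => (ih z).1; have f1 := fun z => (ih z).2
      simp [BKForm.subst, verify, falsify, v1, f1]
  simp only [BKForm.biimp, verify]
  exact ⟨(main χ x).1.mp, (main χ x).1.mpr⟩
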